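/- Let A be an m×m real matrix, Ã a symmetric m×m real matrix, Â := Ã + εI for some ε ≥ 0, and B, B̃ be m×n real matrices. Let δ, γ, β, R, α₁, α₂ be nonnegative reals with α₁ > 0 and α₂ > 0. Assume ‖Ã − A‖_op ≤ γδ, ‖B̃ − B‖_F ≤ βδ, ‖B‖_F ≤ R, ‖Ãv‖ ≥ α₁‖v‖ and vᵀÃv ≥ 0 for all v ∈ ℝ^m, and ‖Av‖ ≥ α₂‖v‖ for all v ∈ ℝ^m. Then Â and A are invertible and ‖Â⁻¹B̃ − A⁻¹B‖_F ≤ βδ/(α₁ + ε) + R(γδ + ε)/((α₁ + ε)α₂). -/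

import Mathlib

open Matrix

/-- Euclidean (ℓ²) norm of a vector. -/
noncomputable def euclNorm {ι : Type*} [Fintype ι] (v : ι → ℝ) : ℝ :=
  Real.sqrt (∑ i, v i ^ 2)

/-- Frobenius norm of a real matrix. -/
noncomputable def frobNorm {ι κ : Type*} [Fintype ι] [Fintype κ] (M : Matrix ι κ ℝ) : ℝ :=
  Real.sqrt (∑ i, ∑ j, M i j ^ 2)

/-- ℓ²→ℓ² operator norm of a real matrix. -/
noncomputable def l2OpNorm {ι κ : Type*} [Fintype ι] [Fintype κ] [DecidableEq κ]
    (M : Matrix ι κ ℝ) : ℝ :=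
  ‖(Matrix.toEuclideanLin M).toContinuousLinearMap‖

section helpers

variable {ι κ σ : Type*} [Fintype ι] [Fintype κ] [Fintype σ]

lemma euclNorm_eq (v : ι → ℝ) : euclNorm v = ‖(WithLp.equiv 2 (ι → ℝ)).symm v‖ := by
  rw [EuclideanSpace.norm_eq]
  simp [euclNorm, Real.norm_eq_abs, sq_abs]

lemma euclNorm_nonneg (v : ι → ℝ) : 0 ≤ euclNorm v := Real.sqrt_nonneg _

lemma sq_euclNorm (v : ι → ℝ) : euclNorm v ^ 2 = ∑ i, v i ^ 2 :=
  Real.sq_sqrt (Finset.sum_nonneg fun _ _ => sq_nonneg _)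

lemma eq_zero_of_euclNorm_nonpos {v : ι → ℝ} (h : euclNorm v ≤ 0) : v = 0 := by
  rw [euclNorm_eq] at h
  have h0 : (WithLp.equiv 2 (ι → ℝ)).symm v = 0 :=
    norm_eq_zero.mp (le_antisymm h (norm_nonneg _))
  have := congrArg (WithLp.equiv 2 (ι → ℝ)) h0
  simpa using this

lemma dotProduct_le_euclNorm (v w : ι → ℝ) : v ⬝ᵥ w ≤ euclNorm v * euclNorm w := by
  have h := real_inner_le_norm ((WithLp.equiv 2 (ι → ℝ)).symm v)
    ((WithLp.equiv 2 (ι → ℝ)).symm w)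
  rw [euclNorm_eq, euclNorm_eq]
  simpa [PiLp.inner_apply, RCLike.inner_apply, dotProduct, mul_comm] using h

lemma euclNorm_mulVec_le [DecidableEq κ] (M : Matrix ι κ ℝ) (v : κ → ℝ) :
    euclNorm (M *ᵥ v) ≤ l2OpNorm M * euclNorm v := by
  have h := ((Matrix.toEuclideanLin M).toContinuousLinearMap).le_opNorm
    ((WithLp.equiv 2 (κ → ℝ)).symm v)
  rw [euclNorm_eq, euclNorm_eq]
  simpa [l2OpNorm, Matrix.toEuclideanLin_toLp] using h

lemma frobNorm_nonneg (M : Matrix ι κ ℝ) : 0 ≤ frobNorm M := Real.sqrt_nonneg _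

lemma frobNorm_eq_euclNorm (M : Matrix ι κ ℝ) :
    frobNorm M = euclNorm (fun p : ι × κ => M p.1 p.2) := by
  rw [frobNorm, euclNorm, Fintype.sum_prod_type]

lemma frobNorm_add_le (X Y : Matrix ι κ ℝ) :
    frobNorm (X + Y) ≤ frobNorm X + frobNorm Y := by
  rw [frobNorm_eq_euclNorm, frobNorm_eq_euclNorm, frobNorm_eq_euclNorm,
    euclNorm_eq, euclNorm_eq, euclNorm_eq]
  have h : (WithLp.equiv 2 ((ι × κ) → ℝ)).symm (fun p => (X + Y) p.1 p.2) =
      (WithLp.equiv 2 ((ι × κ) → ℝ)).symm (fun p => X p.1 p.2) +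
        (WithLp.equiv 2 ((ι × κ) → ℝ)).symm (fun p => Y p.1 p.2) := rfl
  rw [h]
  exact norm_add_le _ _

lemma frobNorm_mul_le {c : ℝ} (hc : 0 ≤ c) (M : Matrix ι κ ℝ)
    (h : ∀ v : κ → ℝ, euclNorm (M *ᵥ v) ≤ c * euclNorm v) (N : Matrix κ σ ℝ) :
    frobNorm (M * N) ≤ c * frobNorm N := by
  have key : ∀ j, ∑ i, ((M * N) i j) ^ 2 ≤ c ^ 2 * ∑ k, (N k j) ^ 2 := by
    intro j
    have h1 : ∑ i, ((M * N) i j) ^ 2 = euclNorm (M *ᵥ fun k => N k j) ^ 2 := by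
      rw [sq_euclNorm]
      apply Finset.sum_congr rfl
      intro i _
      simp [Matrix.mul_apply, Matrix.mulVec, dotProduct]
    have h2 : euclNorm (M *ᵥ fun k => N k j) ^ 2 ≤ (c * euclNorm fun k => N k j) ^ 2 :=
      pow_le_pow_left₀ (euclNorm_nonneg _) (h _) 2
    rw [h1]
    calc euclNorm (M *ᵥ fun k => N k j) ^ 2 ≤ (c * euclNorm fun k => N k j) ^ 2 := h2
      _ = c ^ 2 * ∑ k, (N k j) ^ 2 := by rw [mul_pow, sq_euclNorm]
  have main : ∑ i, ∑ j, ((M * N) i j) ^ 2 ≤ c ^ 2 * ∑ k, ∑ j, (N k j) ^ 2 := by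
    rw [Finset.sum_comm]
    calc ∑ j, ∑ i, ((M * N) i j) ^ 2 ≤ ∑ j, c ^ 2 * ∑ k, (N k j) ^ 2 :=
          Finset.sum_le_sum fun j _ => key j
      _ = c ^ 2 * ∑ k, ∑ j, (N k j) ^ 2 := by rw [← Finset.mul_sum, Finset.sum_comm]
  calc frobNorm (M * N) = Real.sqrt (∑ i, ∑ j, ((M * N) i j) ^ 2) := rfl
    _ ≤ Real.sqrt (c ^ 2 * ∑ k, ∑ j, (N k j) ^ 2) := Real.sqrt_le_sqrt main
    _ = c * frobNorm N := by
        rw [Real.sqrt_mul (sq_nonneg c), Real.sqrt_sq hc]; rfl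

lemma isUnit_of_euclNorm_lowerBound {m : ℕ} {M : Matrix (Fin m) (Fin m) ℝ} {a : ℝ}
    (ha : 0 < a) (hlb : ∀ v, a * euclNorm v ≤ euclNorm (M *ᵥ v)) : IsUnit M := by
  rw [← Matrix.mulVec_injective_iff_isUnit]
  intro x y hxy
  have h := hlb (x - y)
  rw [Matrix.mulVec_sub, hxy, sub_self] at h
  have h0 : euclNorm (0 : Fin m → ℝ) = 0 := by simp [euclNorm]
  rw [h0] at h
  have : euclNorm (x - y) ≤ 0 := nonpos_of_mul_nonpos_right (by linarith [mul_nonneg ha.le (euclNorm_nonneg (x - y))]) ha |>.trans_eq rfl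
  have := eq_zero_of_euclNorm_nonpos this
  exact sub_eq_zero.mp this

lemma euclNorm_inv_mulVec_le {m : ℕ} {M : Matrix (Fin m) (Fin m) ℝ} {a : ℝ} (ha : 0 < a)
    (hu : IsUnit M) (hlb : ∀ v, a * euclNorm v ≤ euclNorm (M *ᵥ v)) (w : Fin m → ℝ) :
    euclNorm (M⁻¹ *ᵥ w) ≤ a⁻¹ * euclNorm w := by
  have h1 : M *ᵥ (M⁻¹ *ᵥ w) = w := by
    rw [Matrix.mulVec_mulVec, Matrix.mul_nonsing_inv _ ((Matrix.isUnit_iff_isUnit_det _).mp hu),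
      Matrix.one_mulVec]
  have h2 := hlb (M⁻¹ *ᵥ w)
  rw [h1] at h2
  rw [inv_mul_eq_div, le_div_iff₀ ha]
  linarith

end helpers

/-- Quadratic form lower bound for a symmetric PSD matrix with singular values ≥ α. -/
lemma quadform_lb {m : ℕ} {A' : Matrix (Fin m) (Fin m) ℝ} {α : ℝ} (hα : 0 < α)
    (hsymm : A'.IsSymm)
    (hlb : ∀ v, α * euclNorm v ≤ euclNorm (A' *ᵥ v))
    (hpsd : ∀ v, 0 ≤ v ⬝ᵥ A' *ᵥ v) (v : Fin m → ℝ) :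
    α * euclNorm v ^ 2 ≤ v ⬝ᵥ A' *ᵥ v := by
  have hHerm : A'.IsHermitian := by
    rw [Matrix.IsHermitian, Matrix.conjTranspose_eq_transpose_of_trivial]
    exact hsymm
  have hT : (Matrix.toEuclideanLin A').IsSymmetric :=
    Matrix.isHermitian_iff_isSymmetric.mp hHerm
  have hn : Module.finrank ℝ (EuclideanSpace ℝ (Fin m)) = m := finrank_euclideanSpace_fin
  set T := Matrix.toEuclideanLin A' with hTdef
  set b := hT.eigenvectorBasis hn with hbdef
  set μ := hT.eigenvalues hn with hμdef
  -- dot product as inner product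
  have hinner : ∀ w : Fin m → ℝ,
      (inner ℝ ((WithLp.equiv 2 (Fin m → ℝ)).symm w)
        (T ((WithLp.equiv 2 (Fin m → ℝ)).symm w)) : ℝ) = w ⬝ᵥ A' *ᵥ w := by
    intro w
    rw [hTdef]
    simp [Matrix.toEuclideanLin_toLp, PiLp.inner_apply, RCLike.inner_apply, dotProduct, mul_comm]
  -- lower bound on norms, E version
  have hTlb : ∀ x : EuclideanSpace ℝ (Fin m), α * ‖x‖ ≤ ‖T x‖ := by
    intro x
    have h := hlb ((WithLp.equiv 2 (Fin m → ℝ)) x)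
    rw [euclNorm_eq, euclNorm_eq] at h
    simpa [hTdef, Matrix.toEuclideanLin_apply] using h
  have hTpsd : ∀ x : EuclideanSpace ℝ (Fin m), (0 : ℝ) ≤ inner ℝ x (T x) := by
    intro x
    have h := hinner ((WithLp.equiv 2 (Fin m → ℝ)) x)
    simp only [Equiv.symm_apply_apply] at h
    rw [h]
    exact hpsd _
  -- eigenvalues are ≥ α
  have hμ : ∀ i, α ≤ μ i := by
    intro i
    have hv := hT.apply_eigenvectorBasis hn i
    have hnorm : ‖b i‖ = 1 := b.orthonormal.1 i
    have h1 : α ≤ |μ i| := by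
      have := hTlb (b i)
      rw [hv] at this
      rw [norm_smul, Real.norm_eq_abs, hnorm, mul_one, mul_one] at this
      exact this
    have h2 : 0 ≤ μ i := by
      have := hTpsd (b i)
      rw [hv, real_inner_smul_right, real_inner_self_eq_norm_sq, hnorm] at this
      simpa using this
    rwa [abs_of_nonneg h2] at h1
  -- main computation
  set x : EuclideanSpace ℝ (Fin m) := (WithLp.equiv 2 (Fin m → ℝ)).symm v with hxdef
  have hx : euclNorm v = ‖x‖ := euclNorm_eq v
  have hrepr : (inner ℝ x (T x) : ℝ) = ∑ i, μ i * (b.repr x i) ^ 2 := by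
    rw [← b.repr.inner_map_map x (T x)]
    simp only [PiLp.inner_apply, RCLike.inner_apply, starRingEnd_apply, star_trivial]
    apply Finset.sum_congr rfl
    intro i _
    rw [hT.eigenvectorBasis_apply_self_apply hn x i]
    simp only [RCLike.ofReal_real_eq_id, id]
    ring
  have hnormsq : ‖x‖ ^ 2 = ∑ i, (b.repr x i) ^ 2 := by
    rw [← LinearIsometryEquiv.norm_map b.repr x, EuclideanSpace.norm_eq,
      Real.sq_sqrt (by positivity)]
    simp [Real.norm_eq_abs, sq_abs]
  have hsum : α * ∑ i, (b.repr x i) ^ 2 ≤ ∑ i, μ i * (b.repr x i) ^ 2 := by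
    rw [Finset.mul_sum]
    exact Finset.sum_le_sum fun i _ => mul_le_mul_of_nonneg_right (hμ i) (sq_nonneg _)
  have := hinner v
  rw [← hxdef] at this
  rw [← this, hrepr, hx, hnormsq]
  exact hsum

/-- **Regularized First-Order Error Bound (Theorem 5 of the paper).**
Here `Â = A' + ε I` is the regularized inexact linear system. -/
theorem regularized_first_order_error_bound {m n : ℕ}
    (A A' : Matrix (Fin m) (Fin m) ℝ) (B B' : Matrix (Fin m) (Fin n) ℝ)
    (δ γ β R α₁ α₂ ε : ℝ)
    (hsymm : A'.IsSymm) (hε : 0 ≤ ε)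
    (hδ : 0 ≤ δ) (hγ : 0 ≤ γ) (hβ : 0 ≤ β) (hR : 0 ≤ R)
    (hα₁ : 0 < α₁) (hα₂ : 0 < α₂)
    (hAop : l2OpNorm (A' - A) ≤ γ * δ)
    (hBF : frobNorm (B' - B) ≤ β * δ)
    (hB : frobNorm B ≤ R)
    (hA'lb : ∀ v : Fin m → ℝ, α₁ * euclNorm v ≤ euclNorm (A'.mulVec v))
    (hpsd : ∀ v : Fin m → ℝ, 0 ≤ v ⬝ᵥ A'.mulVec v)
    (hAlb : ∀ v : Fin m → ℝ, α₂ * euclNorm v ≤ euclNorm (A.mulVec v)) :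
    IsUnit (A' + ε • (1 : Matrix (Fin m) (Fin m) ℝ)) ∧ IsUnit A ∧
      frobNorm ((A' + ε • (1 : Matrix (Fin m) (Fin m) ℝ))⁻¹ * B' - A⁻¹ * B)
        ≤ β * δ / (α₁ + ε) + R * (γ * δ + ε) / ((α₁ + ε) * α₂) := by
  set Ah : Matrix (Fin m) (Fin m) ℝ := A' + ε • 1 with hAhdef
  have hαε : 0 < α₁ + ε := by linarith
  -- quadratic form bound and lower bound for Ah
  have hquad := quadform_lb hα₁ hsymm hA'lb hpsd
  have hAh_lb : ∀ v, (α₁ + ε) * euclNorm v ≤ euclNorm (Ah *ᵥ v) := by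
    intro v
    have hdot : (α₁ + ε) * euclNorm v ^ 2 ≤ v ⬝ᵥ Ah *ᵥ v := by
      have h1 : v ⬝ᵥ Ah *ᵥ v = v ⬝ᵥ A' *ᵥ v + ε * (v ⬝ᵥ v) := by
        simp [hAhdef, Matrix.add_mulVec, Matrix.smul_mulVec, Matrix.one_mulVec,
          dotProduct_add, dotProduct_smul, smul_eq_mul]
      have h2 : v ⬝ᵥ v = euclNorm v ^ 2 := by
        rw [sq_euclNorm]; simp [dotProduct, sq]
      rw [h1, h2]
      have := hquad v
      nlinarith [hquad v]
    have hcs : v ⬝ᵥ Ah *ᵥ v ≤ euclNorm v * euclNorm (Ah *ᵥ v) :=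
      dotProduct_le_euclNorm _ _
    rcases le_or_gt (euclNorm v) 0 with h | h
    · have h0 : euclNorm v = 0 := le_antisymm h (euclNorm_nonneg v)
      rw [h0, mul_zero]
      exact euclNorm_nonneg _
    · nlinarith
  have hu1 : IsUnit Ah := isUnit_of_euclNorm_lowerBound hαε hAh_lb
  have hu2 : IsUnit A := isUnit_of_euclNorm_lowerBound hα₂ hAlb
  refine ⟨hu1, hu2, ?_⟩
  -- matrix identity
  have hAinv : A * A⁻¹ = 1 := Matrix.mul_nonsing_inv _ ((Matrix.isUnit_iff_isUnit_det _).mp hu2)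
  have hAhinv : Ah⁻¹ * Ah = 1 := Matrix.nonsing_inv_mul _ ((Matrix.isUnit_iff_isUnit_det _).mp hu1)
  set C : Matrix (Fin m) (Fin n) ℝ := (B' - B) + (A - Ah) * (A⁻¹ * B) with hCdef
  have key : Ah⁻¹ * B' - A⁻¹ * B = Ah⁻¹ * C := by
    have e1 : (A - Ah) * (A⁻¹ * B) = B - Ah * (A⁻¹ * B) := by
      rw [Matrix.sub_mul, ← Matrix.mul_assoc, hAinv, Matrix.one_mul]
    rw [hCdef, e1, Matrix.mul_add, Matrix.mul_sub, Matrix.mul_sub, ← Matrix.mul_assoc,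
      hAhinv, Matrix.one_mul]
    abel
  -- operator norm bound on A - Ah
  have hl2_add : ∀ X Y : Matrix (Fin m) (Fin m) ℝ,
      l2OpNorm (X + Y) ≤ l2OpNorm X + l2OpNorm Y := by
    intro X Y
    unfold l2OpNorm
    rw [map_add, map_add]
    exact norm_add_le _ _
  have hl2_neg : ∀ X : Matrix (Fin m) (Fin m) ℝ, l2OpNorm (-X) = l2OpNorm X := by
    intro X
    unfold l2OpNorm
    rw [map_neg, map_neg, norm_neg]
  have hl2_smul : ∀ (c : ℝ) (X : Matrix (Fin m) (Fin m) ℝ),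
      l2OpNorm (c • X) = |c| * l2OpNorm X := by
    intro c X
    unfold l2OpNorm
    rw [_root_.map_smul, _root_.map_smul]
    exact (norm_smul c ((Matrix.toEuclideanLin X).toContinuousLinearMap)).trans (by rw [Real.norm_eq_abs])
  have hl2_one : l2OpNorm (1 : Matrix (Fin m) (Fin m) ℝ) ≤ 1 := by
    unfold l2OpNorm
    apply ContinuousLinearMap.opNorm_le_bound _ zero_le_one
    intro x
    rw [one_mul]
    have h1 : Matrix.toEuclideanLin (1 : Matrix (Fin m) (Fin m) ℝ) = LinearMap.id := by
      apply LinearMap.ext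
      intro y
      rw [Matrix.toEuclideanLin_apply, Matrix.one_mulVec]
      rfl
    rw [h1]
    simp
  have hop : l2OpNorm (A - Ah) ≤ γ * δ + ε := by
    have e2 : A - Ah = -((A' - A) + ε • (1 : Matrix (Fin m) (Fin m) ℝ)) := by
      rw [hAhdef]; abel
    rw [e2, hl2_neg]
    calc l2OpNorm ((A' - A) + ε • (1 : Matrix (Fin m) (Fin m) ℝ))
        ≤ l2OpNorm (A' - A) + l2OpNorm (ε • (1 : Matrix (Fin m) (Fin m) ℝ)) := hl2_add _ _
      _ ≤ γ * δ + ε := by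
          rw [hl2_smul, abs_of_nonneg hε]
          have := mul_le_mul_of_nonneg_left hl2_one hε
          linarith
  -- assemble
  have hAhinv_lb : ∀ w, euclNorm (Ah⁻¹ *ᵥ w) ≤ (α₁ + ε)⁻¹ * euclNorm w :=
    euclNorm_inv_mulVec_le hαε hu1 hAh_lb
  have hAinv_lb : ∀ w, euclNorm (A⁻¹ *ᵥ w) ≤ α₂⁻¹ * euclNorm w :=
    euclNorm_inv_mulVec_le hα₂ hu2 hAlb
  have hfrob_AinvB : frobNorm (A⁻¹ * B) ≤ α₂⁻¹ * R := by
    calc frobNorm (A⁻¹ * B) ≤ α₂⁻¹ * frobNorm B :=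
          frobNorm_mul_le (inv_nonneg.mpr hα₂.le) _ hAinv_lb B
      _ ≤ α₂⁻¹ * R := mul_le_mul_of_nonneg_left hB (inv_nonneg.mpr hα₂.le)
  have hfrob_mid : frobNorm ((A - Ah) * (A⁻¹ * B)) ≤ (γ * δ + ε) * (α₂⁻¹ * R) := by
    have hbnd : ∀ v, euclNorm ((A - Ah) *ᵥ v) ≤ (γ * δ + ε) * euclNorm v := by
      intro v
      calc euclNorm ((A - Ah) *ᵥ v) ≤ l2OpNorm (A - Ah) * euclNorm v :=
            euclNorm_mulVec_le _ _
        _ ≤ (γ * δ + ε) * euclNorm v :=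
            mul_le_mul_of_nonneg_right hop (euclNorm_nonneg v)
    calc frobNorm ((A - Ah) * (A⁻¹ * B)) ≤ (γ * δ + ε) * frobNorm (A⁻¹ * B) :=
          frobNorm_mul_le (by positivity) _ hbnd _
      _ ≤ (γ * δ + ε) * (α₂⁻¹ * R) :=
          mul_le_mul_of_nonneg_left hfrob_AinvB (by positivity)
  have hfrob_C : frobNorm C ≤ β * δ + (γ * δ + ε) * (α₂⁻¹ * R) := by
    calc frobNorm C ≤ frobNorm (B' - B) + frobNorm ((A - Ah) * (A⁻¹ * B)) :=
          frobNorm_add_le _ _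
      _ ≤ β * δ + (γ * δ + ε) * (α₂⁻¹ * R) := add_le_add hBF hfrob_mid
  calc frobNorm (Ah⁻¹ * B' - A⁻¹ * B) = frobNorm (Ah⁻¹ * C) := by rw [key]
    _ ≤ (α₁ + ε)⁻¹ * frobNorm C :=
        frobNorm_mul_le (inv_nonneg.mpr hαε.le) _ hAhinv_lb C
    _ ≤ (α₁ + ε)⁻¹ * (β * δ + (γ * δ + ε) * (α₂⁻¹ * R)) :=
        mul_le_mul_of_nonneg_left hfrob_C (inv_nonneg.mpr hαε.le)
    _ = β * δ / (α₁ + ε) + R * (γ * δ + ε) / ((α₁ + ε) * α₂) := by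
        field_simp
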